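/- Let V ⊆ ℝ^d be a Borel-measurable cone (closed under multiplication by positive scalars) with dual cone V*, and let w ∈ ℝ^d. Then γ(V + w) ≥ γ(V) · exp(−½‖w‖² − dist(w, −V*)·√d) and γ(V + w) ≤ γ(V) · exp(−½‖proj_{V*} w‖² + dist(w, V*)·√d). -/

import Mathlib

open MeasureTheory Set Metric RealInnerProductSpace Topology Filter

set_option maxHeartbeats 1000000

noncomputable section

/-- Standard Gaussian measure of a set in `ℝ^d`. -/
def gauss {d : ℕ} (B : Set (EuclideanSpace ℝ (Fin d))) : ℝ :=
  ∫ x in B, (2 * Real.pi) ^ (-(d : ℝ) / 2) * Real.exp (-‖x‖ ^ 2 / 2)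

/-- Dual cone of a set. -/
def dualCone {d : ℕ} (V : Set (EuclideanSpace ℝ (Fin d))) : Set (EuclideanSpace ℝ (Fin d)) :=
  {y | ∀ x ∈ V, 0 ≤ ⟪x, y⟫}

namespace Stmt4Aux

variable {d : ℕ}

lemma integrable_base {b : ℝ} (hb : 0 < b) :
    Integrable (fun x : EuclideanSpace ℝ (Fin d) => Real.exp (-(b * ‖x‖ ^ 2) / 2)) := by
  have h := (GaussianFourier.integrable_cexp_neg_mul_sq_norm_add
      (V := EuclideanSpace ℝ (Fin d)) (b := ((b / 2 : ℝ) : ℂ))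
      (by simpa using by positivity) 0 0).norm
  refine h.congr (Filter.Eventually.of_forall fun x => ?_)
  simp only [Complex.norm_exp]
  congr 1
  rw [show (-(((b / 2 : ℝ)) : ℂ) * (‖x‖ : ℂ) ^ 2 + 0 * ((⟪(0 : EuclideanSpace ℝ (Fin d)), x⟫ : ℝ) : ℂ))
      = (((-(b * ‖x‖ ^ 2) / 2 : ℝ)) : ℂ) from by push_cast; ring, Complex.ofReal_re]

lemma integrable_linear (c : ℝ) :
    Integrable (fun x : EuclideanSpace ℝ (Fin d) => Real.exp (-‖x‖ ^ 2 / 2 + c * ‖x‖)) := by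
  have hbase : Integrable (fun x : EuclideanSpace ℝ (Fin d) =>
      Real.exp (c ^ 2) * Real.exp (-((1 / 2 : ℝ) * ‖x‖ ^ 2) / 2)) :=
    (integrable_base (by norm_num)).const_mul _
  refine hbase.mono ?_ (Filter.Eventually.of_forall fun x => ?_)
  · exact (Real.continuous_exp.comp (by fun_prop)).aestronglyMeasurable
  · rw [Real.norm_eq_abs, Real.norm_eq_abs, abs_of_nonneg (Real.exp_pos _).le,
      abs_of_nonneg (by positivity), ← Real.exp_add, Real.exp_le_exp]
    nlinarith [sq_nonneg (‖x‖ / 2 - c)]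

lemma integrable_inner (w : EuclideanSpace ℝ (Fin d)) :
    Integrable (fun x : EuclideanSpace ℝ (Fin d) => Real.exp (-‖x‖ ^ 2 / 2 - ⟪x, w⟫)) := by
  refine (integrable_linear ‖w‖).mono ?_ (Filter.Eventually.of_forall fun x => ?_)
  · have hcont : Continuous fun x : EuclideanSpace ℝ (Fin d) => ⟪x, w⟫ :=
      continuous_id.inner continuous_const
    exact (Real.continuous_exp.comp (by fun_prop)).aestronglyMeasurable
  · rw [Real.norm_eq_abs, Real.norm_eq_abs, abs_of_nonneg (Real.exp_pos _).le,
      abs_of_nonneg (Real.exp_pos _).le, Real.exp_le_exp]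
    have h := abs_real_inner_le_norm x w
    have h2 : -⟪x, w⟫ ≤ ‖x‖ * ‖w‖ := by cases' abs_le.1 h with h1 _; linarith
    nlinarith

lemma integrable_negnorm {c : ℝ} (hc : 0 ≤ c) :
    Integrable (fun x : EuclideanSpace ℝ (Fin d) => Real.exp (-‖x‖ ^ 2 / 2 - c * ‖x‖)) := by
  refine (integrable_linear 0).mono ?_ (Filter.Eventually.of_forall fun x => ?_)
  · exact (Real.continuous_exp.comp (by fun_prop)).aestronglyMeasurable
  · rw [Real.norm_eq_abs, Real.norm_eq_abs, abs_of_nonneg (Real.exp_pos _).le,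
      abs_of_nonneg (Real.exp_pos _).le, Real.exp_le_exp]
    nlinarith [mul_nonneg hc (norm_nonneg x)]

lemma scale (V : Set (EuclideanSpace ℝ (Fin d))) (hVmeas : MeasurableSet V)
    (hVcone : ∀ c : ℝ, 0 < c → ∀ x ∈ V, c • x ∈ V) {s : ℝ} (hs : 0 < s) :
    ∫ x in V, Real.exp (-(s * ‖x‖ ^ 2) / 2)
      = s ^ (-(d : ℝ) / 2) * ∫ x in V, Real.exp (-‖x‖ ^ 2 / 2) := by
  have hsq : 0 < Real.sqrt s := Real.sqrt_pos.2 hs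
  have hmem : ∀ x : EuclideanSpace ℝ (Fin d), Real.sqrt s • x ∈ V ↔ x ∈ V := by
    intro x
    constructor
    · intro h
      have h2 := hVcone (Real.sqrt s)⁻¹ (by positivity) _ h
      rwa [smul_smul, inv_mul_cancel₀ hsq.ne', one_smul] at h2
    · exact hVcone _ hsq x
  have key := MeasureTheory.Measure.integral_comp_smul_of_nonneg (μ := volume)
      (V.indicator fun y : EuclideanSpace ℝ (Fin d) => Real.exp (-‖y‖ ^ 2 / 2))
      (Real.sqrt s) (hR := Real.sqrt_nonneg s)
  have hpt : ∀ x : EuclideanSpace ℝ (Fin d),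
      V.indicator (fun y : EuclideanSpace ℝ (Fin d) => Real.exp (-‖y‖ ^ 2 / 2))
        (Real.sqrt s • x)
      = V.indicator (fun x : EuclideanSpace ℝ (Fin d) => Real.exp (-(s * ‖x‖ ^ 2) / 2)) x := by
    intro x
    by_cases hx : x ∈ V
    · rw [indicator_of_mem ((hmem x).2 hx), indicator_of_mem hx]
      rw [norm_smul, Real.norm_eq_abs, abs_of_nonneg (Real.sqrt_nonneg s), mul_pow,
        Real.sq_sqrt hs.le]
    · rw [indicator_of_notMem (fun h => hx ((hmem x).1 h)), indicator_of_notMem hx]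
  rw [show (fun x : EuclideanSpace ℝ (Fin d) =>
      V.indicator (fun y : EuclideanSpace ℝ (Fin d) => Real.exp (-‖y‖ ^ 2 / 2))
        (Real.sqrt s • x)) = V.indicator
          (fun x : EuclideanSpace ℝ (Fin d) => Real.exp (-(s * ‖x‖ ^ 2) / 2))
      from funext hpt, integral_indicator hVmeas, integral_indicator hVmeas,
    finrank_euclideanSpace_fin, smul_eq_mul] at key
  rw [key]
  congr 1
  rw [Real.sqrt_eq_rpow, ← Real.rpow_natCast (s ^ ((1 : ℝ) / 2)) d, ← Real.rpow_mul hs.le,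
    ← Real.rpow_neg hs.le]
  congr 1
  ring

lemma lowerExp (V : Set (EuclideanSpace ℝ (Fin d))) (hVmeas : MeasurableSet V)
    (hVcone : ∀ c : ℝ, 0 < c → ∀ x ∈ V, c • x ∈ V) (hd : 0 < d) {c : ℝ} (hc : 0 ≤ c) :
    Real.exp (-(c * Real.sqrt d)) * ∫ x in V, Real.exp (-‖x‖ ^ 2 / 2)
      ≤ ∫ x in V, Real.exp (-‖x‖ ^ 2 / 2 - c * ‖x‖) := by
  set A := ∫ x in V, Real.exp (-‖x‖ ^ 2 / 2) with hAdef
  have hA0 : 0 ≤ A := setIntegral_nonneg hVmeas fun x _ => (Real.exp_pos _).le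
  set t := Real.sqrt d with htdef
  have hdr : (0 : ℝ) < d := by exact_mod_cast hd
  have ht : 0 < t := Real.sqrt_pos.2 hdr
  set u := c / t with hu'
  have hu : 0 ≤ u := div_nonneg hc ht.le
  have hut : u * t = c := div_mul_cancel₀ c ht.ne'
  have ht2 : t * t = (d : ℝ) := Real.mul_self_sqrt (Nat.cast_nonneg d)
  have hs : (0 : ℝ) < 1 + u := by linarith
  clear_value A t u
  have hpt : ∀ x ∈ V,
      Real.exp (-(c * t) / 2) * Real.exp (-((1 + u) * ‖x‖ ^ 2) / 2)
        ≤ Real.exp (-‖x‖ ^ 2 / 2 - c * ‖x‖) := by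
    intro x _
    rw [← Real.exp_add, Real.exp_le_exp, ← hut]
    nlinarith [mul_nonneg hu (sq_nonneg (t - ‖x‖))]
  have hint1 : IntegrableOn (fun x : EuclideanSpace ℝ (Fin d) =>
      Real.exp (-(c * t) / 2) * Real.exp (-((1 + u) * ‖x‖ ^ 2) / 2)) V :=
    ((integrable_base hs).const_mul _).integrableOn
  have hint2 : IntegrableOn (fun x : EuclideanSpace ℝ (Fin d) =>
      Real.exp (-‖x‖ ^ 2 / 2 - c * ‖x‖)) V := (integrable_negnorm hc).integrableOn
  have h1 := setIntegral_mono_on hint1 hint2 hVmeas hpt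
  rw [integral_const_mul, scale V hVmeas hVcone hs, ← hAdef] at h1
  refine le_trans ?_ h1
  have h3 : Real.exp (-(u * (d : ℝ)) / 2) ≤ (1 + u) ^ (-(d : ℝ) / 2) := by
    have hb := Real.rpow_le_rpow_of_nonpos (y := Real.exp u) hs
      (by linarith [Real.add_one_le_exp u]) (show -(d : ℝ) / 2 ≤ 0 by linarith)
    rw [Real.rpow_def_of_pos (Real.exp_pos u), Real.log_exp] at hb
    refine le_trans (le_of_eq ?_) hb
    congr 1
    ring
  have heq : Real.exp (-(c * t)) = Real.exp (-(c * t) / 2) * Real.exp (-(u * (d : ℝ)) / 2) := by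
    rw [← Real.exp_add]
    congr 1
    have : u * (d : ℝ) = c * t := by rw [← ht2, ← mul_assoc, hut]
    rw [this]
    ring
  rw [heq, mul_assoc]
  refine mul_le_mul_of_nonneg_left ?_ (Real.exp_pos _).le
  exact mul_le_mul_of_nonneg_right h3 hA0

lemma upperExp (V : Set (EuclideanSpace ℝ (Fin d))) (hVmeas : MeasurableSet V)
    (hVcone : ∀ c : ℝ, 0 < c → ∀ x ∈ V, c • x ∈ V) (hd : 0 < d) {c : ℝ} (hc : 0 ≤ c) :
    ∫ x in V, Real.exp (-‖x‖ ^ 2 / 2 + c * ‖x‖)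
      ≤ Real.exp (c ^ 2 / 2 + c * Real.sqrt d) * ∫ x in V, Real.exp (-‖x‖ ^ 2 / 2) := by
  set A := ∫ x in V, Real.exp (-‖x‖ ^ 2 / 2) with hAdef
  have hA0 : 0 ≤ A := setIntegral_nonneg hVmeas fun x _ => (Real.exp_pos _).le
  set r := Real.sqrt d with hrdef
  have hdr : (0 : ℝ) < d := by exact_mod_cast hd
  have hr : 0 < r := Real.sqrt_pos.2 hdr
  have hr2 : r * r = (d : ℝ) := Real.mul_self_sqrt (Nat.cast_nonneg d)
  set t := c + r with htdef
  have ht : 0 < t := by linarith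
  set u := c / t with hu'
  have hu : 0 ≤ u := div_nonneg hc ht.le
  have hut : u * t = c := div_mul_cancel₀ c ht.ne'
  have hu1 : u < 1 := by
    rw [hu', div_lt_one ht, htdef]
    linarith
  have hs : (0 : ℝ) < 1 - u := by linarith
  clear_value A r t u
  have hpt : ∀ x ∈ V,
      Real.exp (-‖x‖ ^ 2 / 2 + c * ‖x‖)
        ≤ Real.exp ((c * t) / 2) * Real.exp (-((1 - u) * ‖x‖ ^ 2) / 2) := by
    intro x _
    rw [← Real.exp_add, Real.exp_le_exp, ← hut]
    nlinarith [mul_nonneg hu (sq_nonneg (t - ‖x‖))]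
  have hint1 : IntegrableOn (fun x : EuclideanSpace ℝ (Fin d) =>
      Real.exp (-‖x‖ ^ 2 / 2 + c * ‖x‖)) V := (integrable_linear c).integrableOn
  have hint2 : IntegrableOn (fun x : EuclideanSpace ℝ (Fin d) =>
      Real.exp ((c * t) / 2) * Real.exp (-((1 - u) * ‖x‖ ^ 2) / 2)) V :=
    ((integrable_base hs).const_mul _).integrableOn
  have h1 := setIntegral_mono_on hint1 hint2 hVmeas hpt
  rw [integral_const_mul, scale V hVmeas hVcone hs, ← hAdef] at h1
  refine h1.trans ?_
  have hsinv : (1 - u)⁻¹ = 1 + c / r := by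
    refine inv_eq_of_mul_eq_one_right ?_
    rw [hu', htdef]
    field_simp
    ring
  have h3 : (1 - u) ^ (-(d : ℝ) / 2) ≤ Real.exp (c * r / 2) := by
    rw [neg_div, Real.rpow_neg hs.le, ← Real.inv_rpow hs.le]
    have hbound : (1 - u)⁻¹ ≤ Real.exp (c / r) := by
      rw [hsinv]
      linarith [Real.add_one_le_exp (c / r)]
    have h4 := Real.rpow_le_rpow (by positivity) hbound (by positivity : (0:ℝ) ≤ (d : ℝ) / 2)
    refine h4.trans (le_of_eq ?_)
    rw [Real.rpow_def_of_pos (Real.exp_pos _), Real.log_exp]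
    congr 1
    rw [← hr2]
    field_simp
  calc Real.exp (c * t / 2) * ((1 - u) ^ (-(d : ℝ) / 2) * A)
      ≤ Real.exp (c * t / 2) * (Real.exp (c * r / 2) * A) :=
        mul_le_mul_of_nonneg_left (mul_le_mul_of_nonneg_right h3 hA0) (Real.exp_pos _).le
    _ = Real.exp (c ^ 2 / 2 + c * r) * A := by
        rw [← mul_assoc, ← Real.exp_add, htdef]
        congr 2
        ring

end Stmt4Aux

/-- Gaussian measure of shifted cones: two-sided bounds. -/
theorem stmt4 {d : ℕ} (V : Set (EuclideanSpace ℝ (Fin d))) (hVmeas : MeasurableSet V)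
    (hVcone : ∀ c : ℝ, 0 < c → ∀ x ∈ V, c • x ∈ V)
    (w p : EuclideanSpace ℝ (Fin d))
    (hp : p ∈ dualCone V) (hpmin : ∀ a ∈ dualCone V, dist w p ≤ dist w a) :
    gauss V * Real.exp (-‖w‖ ^ 2 / 2 - infDist w (-(dualCone V)) * Real.sqrt d)
      ≤ gauss ((· + w) '' V) ∧
    gauss ((· + w) '' V)
      ≤ gauss V * Real.exp (-‖p‖ ^ 2 / 2 + infDist w (dualCone V) * Real.sqrt d) := by
  classical
  open Stmt4Aux in
  rcases Nat.eq_zero_or_pos d with hd0 | hd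
  · subst hd0
    haveI : Subsingleton (EuclideanSpace ℝ (Fin 0)) :=
      ⟨fun a b => by ext i; exact i.elim0⟩
    have hw0 : w = 0 := Subsingleton.elim _ _
    have himg : (· + w) '' V = V := by
      ext x
      simp only [mem_image]
      constructor
      · rintro ⟨v, hv, rfl⟩; rwa [Subsingleton.elim (v + w) v]
      · intro hx; exact ⟨x, hx, Subsingleton.elim _ _⟩
    have h0d : (0 : EuclideanSpace ℝ (Fin 0)) ∈ dualCone V := by
      intro x _; rw [inner_zero_right]
    have h1 : infDist w (dualCone V) = 0 := by
      rw [hw0]; exact infDist_zero_of_mem h0d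
    have h2 : infDist w (-(dualCone V)) = 0 := by
      rw [hw0]
      refine infDist_zero_of_mem ?_
      rw [Set.mem_neg, neg_zero]; exact h0d
    have hwn : ‖w‖ = 0 := by rw [hw0, norm_zero]
    have hpn : ‖p‖ = 0 := by rw [Subsingleton.elim p 0, norm_zero]
    rw [himg, h1, h2, hwn, hpn]
    norm_num
  · have hdr : (0 : ℝ) < d := by exact_mod_cast hd
    set C := (2 * Real.pi) ^ (-(d : ℝ) / 2) with hC
    have hCpos : 0 < C := Real.rpow_pos_of_pos (by positivity) _
    set A := ∫ x in V, Real.exp (-‖x‖ ^ 2 / 2) with hAdef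
    have hA0 : 0 ≤ A := setIntegral_nonneg hVmeas fun x _ => (Real.exp_pos _).le
    have hgV : gauss V = C * A := by rw [gauss, integral_const_mul, hAdef]
    have himg_mem : ∀ x : EuclideanSpace ℝ (Fin d), x + w ∈ (· + w) '' V ↔ x ∈ V := by
      intro x
      constructor
      · rintro ⟨v, hv, hvx⟩
        have hvx' : v = x := by
          have : v + w = x + w := hvx
          exact add_right_cancel this
        rwa [hvx'] at hv
      · intro h; exact ⟨x, h, rfl⟩
    have himg_meas : MeasurableSet ((· + w) '' V) := by
      have himg_eq : (· + w) '' V = (fun x => x - w) ⁻¹' V := by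
        ext x
        simp only [mem_image, mem_preimage]
        constructor
        · rintro ⟨v, hv, rfl⟩; simpa using hv
        · intro h; exact ⟨x - w, h, by abel⟩
      rw [himg_eq]
      exact (measurable_id.sub measurable_const) hVmeas
    set J := ∫ x in V, Real.exp (-‖x‖ ^ 2 / 2 - ⟪x, w⟫) with hJdef
    have hgimg : gauss ((· + w) '' V) = Real.exp (-‖w‖ ^ 2 / 2) * (C * J) := by
      have step1 : gauss ((· + w) '' V)
          = ∫ x, ((· + w) '' V).indicator
              (fun x => C * Real.exp (-‖x‖ ^ 2 / 2)) x := by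
        rw [gauss, integral_indicator himg_meas]
      have step2 : ∫ x, ((· + w) '' V).indicator
              (fun x => C * Real.exp (-‖x‖ ^ 2 / 2)) x
          = ∫ x, ((· + w) '' V).indicator
              (fun x => C * Real.exp (-‖x‖ ^ 2 / 2)) (x + w) :=
        (integral_add_right_eq_self _ w).symm
      have step3 : (fun x => ((· + w) '' V).indicator
              (fun x => C * Real.exp (-‖x‖ ^ 2 / 2)) (x + w))
          = V.indicator (fun x =>
              Real.exp (-‖w‖ ^ 2 / 2) * (C * Real.exp (-‖x‖ ^ 2 / 2 - ⟪x, w⟫))) := by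
        funext x
        by_cases hx : x ∈ V
        · rw [indicator_of_mem ((himg_mem x).2 hx), indicator_of_mem hx]
          rw [show Real.exp (-‖w‖ ^ 2 / 2) * (C * Real.exp (-‖x‖ ^ 2 / 2 - ⟪x, w⟫))
              = C * Real.exp (-‖w‖ ^ 2 / 2 + (-‖x‖ ^ 2 / 2 - ⟪x, w⟫)) from by
            rw [Real.exp_add]; ring]
          congr 1
          rw [norm_add_sq_real]
          ring
        · rw [indicator_of_notMem (fun h => hx ((himg_mem x).1 h)),
            indicator_of_notMem hx]
      rw [step1, step2, step3, integral_indicator hVmeas, integral_const_mul,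
        integral_const_mul, hJdef]
    have hJint : IntegrableOn
        (fun x : EuclideanSpace ℝ (Fin d) => Real.exp (-‖x‖ ^ 2 / 2 - ⟪x, w⟫)) V :=
      (integrable_inner w).integrableOn
    constructor
    · -- lower bound
      set D := infDist w (-(dualCone V)) with hDdef
      have hDnn : 0 ≤ D := infDist_nonneg
      have hne : (-(dualCone V)).Nonempty :=
        ⟨0, by rw [Set.mem_neg, neg_zero]; intro x _; rw [inner_zero_right]⟩
      have hlow : ∀ c' : ℝ, D < c' →
          gauss V * Real.exp (-‖w‖ ^ 2 / 2 - c' * Real.sqrt d)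
            ≤ gauss ((· + w) '' V) := by
        intro c' hc'
        obtain ⟨q, hq, hqd⟩ := (infDist_lt_iff hne).1 hc'
        have hc'0 : 0 ≤ c' := hDnn.trans hc'.le
        have hqV : -q ∈ dualCone V := Set.mem_neg.1 hq
        have hpt : ∀ x ∈ V, Real.exp (-‖x‖ ^ 2 / 2 - c' * ‖x‖)
            ≤ Real.exp (-‖x‖ ^ 2 / 2 - ⟪x, w⟫) := by
          intro x hx
          rw [Real.exp_le_exp]
          have h1 : 0 ≤ ⟪x, -q⟫ := hqV x hx
          have h2 : ⟪x, w - q⟫ ≤ ‖x‖ * ‖w - q‖ := real_inner_le_norm x (w - q)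
          have h3 : ‖w - q‖ ≤ c' := by rw [← dist_eq_norm]; exact hqd.le
          have h4 : ⟪x, w⟫ = ⟪x, w - q⟫ + ⟪x, q⟫ := by
            rw [inner_sub_right]; ring
          have h5 : ⟪x, q⟫ ≤ 0 := by rw [inner_neg_right] at h1; linarith
          have h6 : ‖x‖ * ‖w - q‖ ≤ ‖x‖ * c' :=
            mul_le_mul_of_nonneg_left h3 (norm_nonneg x)
          nlinarith
        have hmono : ∫ x in V, Real.exp (-‖x‖ ^ 2 / 2 - c' * ‖x‖) ≤ J :=
          setIntegral_mono_on (integrable_negnorm hc'0).integrableOn hJint hVmeas hpt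
        have hlowexp := lowerExp V hVmeas hVcone hd hc'0
        rw [← hAdef] at hlowexp
        rw [hgimg, hgV]
        calc C * A * Real.exp (-‖w‖ ^ 2 / 2 - c' * Real.sqrt d)
            = Real.exp (-‖w‖ ^ 2 / 2) * (C * (Real.exp (-(c' * Real.sqrt d)) * A)) := by
              rw [show -‖w‖ ^ 2 / 2 - c' * Real.sqrt d
                  = -‖w‖ ^ 2 / 2 + -(c' * Real.sqrt d) from by ring, Real.exp_add]
              ring
          _ ≤ Real.exp (-‖w‖ ^ 2 / 2) * (C * J) := by
              refine mul_le_mul_of_nonneg_left ?_ (Real.exp_pos _).le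
              refine mul_le_mul_of_nonneg_left ?_ hCpos.le
              exact hlowexp.trans hmono
      have hcont : Continuous fun c' : ℝ =>
          gauss V * Real.exp (-‖w‖ ^ 2 / 2 - c' * Real.sqrt d) := by fun_prop
      have hTend : Filter.Tendsto (fun c' : ℝ =>
          gauss V * Real.exp (-‖w‖ ^ 2 / 2 - c' * Real.sqrt d)) (𝓝[>] D)
          (𝓝 (gauss V * Real.exp (-‖w‖ ^ 2 / 2 - D * Real.sqrt d))) :=
        (hcont.tendsto D).mono_left nhdsWithin_le_nhds
      exact le_of_tendsto hTend
        (eventually_nhdsWithin_of_forall fun c' hc' => hlow c' hc')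
    · -- upper bound
      set c := dist w p with hcdef
      have hc0 : 0 ≤ c := dist_nonneg
      have hDc : infDist w (dualCone V) = c := by
        refine le_antisymm (infDist_le_dist_of_mem hp) ?_
        by_contra h
        push_neg at h
        have hne2 : (dualCone V).Nonempty := ⟨p, hp⟩
        obtain ⟨y, hy, hyd⟩ := (infDist_lt_iff hne2).1 h
        exact absurd (hpmin y hy) (not_le.2 hyd)
      clear_value c
      have hB : 0 ≤ ⟪w - p, p⟫ := by
        by_contra hB
        push_neg at hB
        have hp0 : p ≠ 0 := by
          rintro rfl
          rw [inner_zero_right] at hB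
          exact lt_irrefl 0 hB
        have hpn : 0 < ‖p‖ := norm_pos_iff.2 hp0
        set u : ℝ := min (1 / 2) (-⟪w - p, p⟫ / ‖p‖ ^ 2) with hu'
        have hu0 : 0 < u := lt_min (by norm_num) (div_pos (by linarith) (by positivity))
        have hu1 : u ≤ 1 / 2 := min_le_left _ _
        have hmem : (1 - u) • p ∈ dualCone V := by
          intro x hx
          rw [real_inner_smul_right]
          exact mul_nonneg (by linarith) (hp x hx)
        have hdd := hpmin _ hmem
        rw [hcdef, dist_eq_norm, dist_eq_norm] at hdd
        have hsq : ‖w - p‖ ^ 2 ≤ ‖w - (1 - u) • p‖ ^ 2 :=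
          pow_le_pow_left₀ (norm_nonneg _) hdd 2
        have hexp : ‖w - (1 - u) • p‖ ^ 2
            = ‖w - p‖ ^ 2 + 2 * u * ⟪w - p, p⟫ + u ^ 2 * ‖p‖ ^ 2 := by
          have heq2 : w - (1 - u) • p = (w - p) + u • p := by
            rw [sub_smul, one_smul]; abel
          rw [heq2, norm_add_sq_real, real_inner_smul_right, norm_smul,
            Real.norm_eq_abs, abs_of_nonneg hu0.le, mul_pow]
          ring
        have hkey : 0 ≤ 2 * u * ⟪w - p, p⟫ + u ^ 2 * ‖p‖ ^ 2 := by
          rw [hexp] at hsq; linarith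
        have humin : u ≤ -⟪w - p, p⟫ / ‖p‖ ^ 2 := min_le_right _ _
        have humin' : u * ‖p‖ ^ 2 ≤ -⟪w - p, p⟫ :=
          (le_div_iff₀ (by positivity)).1 humin
        nlinarith [mul_le_mul_of_nonneg_left humin' hu0.le,
          mul_pos hu0 (neg_pos.2 hB)]
      have hwsq : ‖p‖ ^ 2 + c ^ 2 ≤ ‖w‖ ^ 2 := by
        have hw : ‖w‖ ^ 2 = ‖w - p‖ ^ 2 + 2 * ⟪w - p, p⟫ + ‖p‖ ^ 2 := by
          conv_lhs => rw [show w = (w - p) + p from by abel]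
          rw [norm_add_sq_real]
        have hcn : c = ‖w - p‖ := hcdef.trans (dist_eq_norm w p)
        rw [hcn]
        linarith
      have hpt : ∀ x ∈ V, Real.exp (-‖x‖ ^ 2 / 2 - ⟪x, w⟫)
          ≤ Real.exp (-‖x‖ ^ 2 / 2 + c * ‖x‖) := by
        intro x hx
        rw [Real.exp_le_exp]
        have h1 : 0 ≤ ⟪x, p⟫ := hp x hx
        have h2 : ⟪x, p - w⟫ ≤ ‖x‖ * ‖p - w‖ := real_inner_le_norm x (p - w)
        have h3 : ‖p - w‖ = c := by rw [norm_sub_rev, ← dist_eq_norm, ← hcdef]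
        have h4 : ⟪x, w⟫ = ⟪x, p⟫ - ⟪x, p - w⟫ := by
          rw [inner_sub_right]; ring
        rw [h3] at h2
        nlinarith [h2, h1, norm_nonneg x]
      have hmono : J ≤ ∫ x in V, Real.exp (-‖x‖ ^ 2 / 2 + c * ‖x‖) :=
        setIntegral_mono_on hJint (integrable_linear c).integrableOn hVmeas hpt
      have hupexp := upperExp V hVmeas hVcone hd hc0
      rw [← hAdef] at hupexp
      rw [hgimg, hgV, hDc]
      calc Real.exp (-‖w‖ ^ 2 / 2) * (C * J)
          ≤ Real.exp (-‖w‖ ^ 2 / 2)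
              * (C * (Real.exp (c ^ 2 / 2 + c * Real.sqrt d) * A)) := by
            refine mul_le_mul_of_nonneg_left ?_ (Real.exp_pos _).le
            refine mul_le_mul_of_nonneg_left ?_ hCpos.le
            exact hmono.trans hupexp
        _ = C * A * Real.exp (-‖w‖ ^ 2 / 2 + (c ^ 2 / 2 + c * Real.sqrt d)) := by
            simp only [Real.exp_add]; ring
        _ ≤ C * A * Real.exp (-‖p‖ ^ 2 / 2 + c * Real.sqrt d) := by
            refine mul_le_mul_of_nonneg_left ?_ (mul_nonneg hCpos.le hA0)
            rw [Real.exp_le_exp]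
            linarith
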